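/- If the augmented Hodge decomposition exists for every input in H^{k+1}, then it is unique: if ρU = −∇p in Ω, m v = ∫_Γ p n dS, 𝕀ω = ∫_Γ p J dS, with ∇·U = 0 in Ω, U·n = v·n + ω·J on Γ, and U·n = 0 on Γ', then U = 0, v = 0, ω = 0, and p is constant. -/

import Mathlib

open MeasureTheory Matrix

/-- Cross product in `ℝ³`. -/
def cross3 (u v : Fin 3 → ℝ) : Fin 3 → ℝ :=
  ![u 1 * v 2 - u 2 * v 1, u 2 * v 0 - u 0 * v 2, u 0 * v 1 - u 1 * v 0]

/-- Gradient of a scalar field on `ℝ³`. -/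
noncomputable def grad3 (p : (Fin 3 → ℝ) → ℝ) (x : Fin 3 → ℝ) : Fin 3 → ℝ :=
  fun i => fderiv ℝ p x (Pi.single i 1)

/-- Dot product with a fixed vector, as a continuous linear map. -/
noncomputable def dotCLM (w : Fin 3 → ℝ) : (Fin 3 → ℝ) →L[ℝ] ℝ :=
  LinearMap.toContinuousLinearMap
    { toFun := fun u => w ⬝ᵥ u
      map_add' := fun a b => dotProduct_add w a b
      map_smul' := fun r a => by simp [dotProduct_smul] }

@[simp] lemma dotCLM_apply (w u : Fin 3 → ℝ) : dotCLM w u = w ⬝ᵥ u := rfl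

/-- If `f` is integrable on `S ∪ T`, vanishes on `T`, and agrees on `S` with a
function `g` integrable on `S`, then the corresponding integrals agree.  No
measurability of the sets `S`, `T` is required. -/
lemma setIntegral_union_eq_of_eqOn {X : Type*} [MeasurableSpace X]
    {μ : Measure X} {S T : Set X} {f g : X → ℝ}
    (hf : IntegrableOn f (S ∪ T) μ) (hT : ∀ x ∈ T, f x = 0)
    (hg : IntegrableOn g S μ) (hfg : ∀ x ∈ S, f x = g x) :
    ∫ x in S ∪ T, f x ∂μ = ∫ x in S, g x ∂μ := by
  have hle : μ.restrict S ≤ μ.restrict (S ∪ T) :=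
    Measure.restrict_mono Set.subset_union_left le_rfl
  set h := hf.aestronglyMeasurable.mk f with hh
  have hhm : StronglyMeasurable h := hf.aestronglyMeasurable.stronglyMeasurable_mk
  have hfh : f =ᵐ[μ.restrict (S ∪ T)] h := hf.aestronglyMeasurable.ae_eq_mk
  have hN : μ.restrict (S ∪ T) {x | f x ≠ h x} = 0 := ae_iff.mp hfh
  obtain ⟨M, hMsub, hMmeas, hMnull⟩ := exists_measurable_superset_of_null hN
  have hMν : μ (M ∩ (S ∪ T)) = 0 := by
    rwa [Measure.restrict_apply hMmeas] at hMnull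
  have hMS : μ (M ∩ S) = 0 :=
    measure_mono_null (Set.inter_subset_inter_right _ Set.subset_union_left) hMν
  set g' := hg.aestronglyMeasurable.mk g with hg'
  have hg'm : StronglyMeasurable g' := hg.aestronglyMeasurable.stronglyMeasurable_mk
  have hgg' : g =ᵐ[μ.restrict S] g' := hg.aestronglyMeasurable.ae_eq_mk
  have hNg : μ.restrict S {x | g x ≠ g' x} = 0 := ae_iff.mp hgg'
  obtain ⟨Mg, hMgsub, hMgmeas, hMgnull⟩ := exists_measurable_superset_of_null hNg
  have hMgS : μ (Mg ∩ S) = 0 := by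
    rwa [Measure.restrict_apply hMgmeas] at hMgnull
  have hfhS : f =ᵐ[μ.restrict S] h := hfh.filter_mono (ae_mono hle)
  have hhg' : h =ᵐ[μ.restrict S] g' := by
    have hD : MeasurableSet {x | h x ≠ g' x} := by
      have := (hhm.measurableSet_eq_fun hg'm).compl
      simpa [Set.compl_setOf] using this
    refine ae_iff.mpr ?_
    have hrw : μ.restrict S {x | h x ≠ g' x} = μ ({x | h x ≠ g' x} ∩ S) :=
      Measure.restrict_apply hD
    rw [show {x | ¬ h x = g' x} = {x | h x ≠ g' x} from rfl, hrw]
    refine measure_mono_null (fun x hx => ?_) (measure_union_null hMS hMgS)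
    obtain ⟨hx1, hx2⟩ := hx
    by_cases hxM : x ∈ M
    · exact Or.inl ⟨hxM, hx2⟩
    · by_cases hxMg : x ∈ Mg
      · exact Or.inr ⟨hxMg, hx2⟩
      · exfalso
        have h1 : f x = h x := by
          by_contra hc; exact hxM (hMsub hc)
        have h2 : g x = g' x := by
          by_contra hc; exact hxMg (hMgsub hc)
        exact hx1 (by rw [← h1, ← h2, hfg x hx2])
  have hsupp : MeasurableSet (Function.support h) := hhm.measurableSet_support
  have hrestr : (μ.restrict (S ∪ T)).restrict (Function.support h)
      = (μ.restrict S).restrict (Function.support h) := by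
    ext A hA
    rw [Measure.restrict_apply hA, Measure.restrict_apply hA,
        Measure.restrict_apply (hA.inter hsupp), Measure.restrict_apply (hA.inter hsupp)]
    refine le_antisymm ?_ (measure_mono (Set.inter_subset_inter_right _ Set.subset_union_left))
    calc μ (A ∩ Function.support h ∩ (S ∪ T))
        ≤ μ ((A ∩ Function.support h ∩ S) ∪ (M ∩ (S ∪ T))) := by
          refine measure_mono (fun x hx => ?_)
          obtain ⟨⟨hxA, hxsupp⟩, hxST⟩ := hx
          rcases hxST with hxS | hxT
          · exact Or.inl ⟨⟨hxA, hxsupp⟩, hxS⟩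
          · refine Or.inr ⟨hMsub ?_, Or.inr hxT⟩
            simp only [Set.mem_setOf_eq]
            rw [hT x hxT]
            exact fun hfx => hxsupp (by simp [Function.mem_support] at *; exact hfx.symm)
      _ ≤ μ (A ∩ Function.support h ∩ S) + μ (M ∩ (S ∪ T)) := measure_union_le _ _
      _ = μ (A ∩ Function.support h ∩ S) := by rw [hMν, add_zero]
  have hzero : ∀ x ∉ Function.support h, h x = 0 := fun x hx => Function.notMem_support.mp hx
  calc ∫ x in S ∪ T, f x ∂μ
      = ∫ x, h x ∂(μ.restrict (S ∪ T)) := integral_congr_ae hfh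
    _ = ∫ x in Function.support h, h x ∂(μ.restrict (S ∪ T)) :=
        (setIntegral_eq_integral_of_forall_compl_eq_zero hzero).symm
    _ = ∫ x in Function.support h, h x ∂(μ.restrict S) := by rw [hrestr]
    _ = ∫ x, h x ∂(μ.restrict S) := setIntegral_eq_integral_of_forall_compl_eq_zero hzero
    _ = ∫ x, g' x ∂(μ.restrict S) := integral_congr_ae hhg'
    _ = ∫ x in S, g x ∂μ := (integral_congr_ae hgg').symm

/-- The trace of a continuous linear endomorphism of `Fin 3 → ℝ` as a sum of
diagonal entries in the standard basis. -/
lemma trace_clm_eq_sum (L : (Fin 3 → ℝ) →L[ℝ] (Fin 3 → ℝ)) :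
    LinearMap.trace ℝ (Fin 3 → ℝ) (L : (Fin 3 → ℝ) →ₗ[ℝ] (Fin 3 → ℝ))
      = ∑ i, L (Pi.single i 1) i := by
  rw [LinearMap.trace_eq_matrix_trace ℝ (Pi.basisFun ℝ (Fin 3))]
  simp [Matrix.trace, Matrix.diag, LinearMap.toMatrix_apply]

/-- (Uniqueness of the augmented Hodge decomposition.)  If
`ρU = −∇p` in `Ω`, `m v = ∫_Γ p n dS`, `𝕀ω = ∫_Γ p J dS`, with `∇·U = 0` in `Ω`,
`U·n = v·n + ω·J` on `Γ`, and `U·n = 0` on `Γ'` (`J(x) = (x−c) × n(x)`), then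
`U = 0`, `v = 0`, `ω = 0` and `p` is constant. -/
theorem augmented_hodge_decomposition_unique
    (Ω : Set (Fin 3 → ℝ)) (hopen : IsOpen Ω) (hconn : IsConnected Ω)
    (hbd : Bornology.IsBounded Ω)
    (Γ Γ' : Set (Fin 3 → ℝ)) (hdisj : Disjoint Γ Γ') (hbdry : Γ ∪ Γ' = frontier Ω)
    (σ : Measure (Fin 3 → ℝ)) (hσfin : σ (Γ ∪ Γ') ≠ ⊤)
    (n : (Fin 3 → ℝ) → (Fin 3 → ℝ)) (hunit : ∀ x ∈ Γ ∪ Γ', ∑ i, n x i ^ 2 = 1)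
    (ρ m : ℝ) (hρ : 0 < ρ) (hm : 0 < m)
    (𝕀 : Matrix (Fin 3) (Fin 3) ℝ) (h𝕀 : 𝕀.PosDef)
    (c : Fin 3 → ℝ) (v ω : Fin 3 → ℝ)
    (U : (Fin 3 → ℝ) → (Fin 3 → ℝ)) (p : (Fin 3 → ℝ) → ℝ)
    (hU : ContDiff ℝ 1 U) (hp : ContDiff ℝ 2 p)
    -- ∫_Γ n dS = 0 and ∫_Γ J dS = 0
    (hn0 : (∫ x in Γ, n x ∂σ) = 0)
    (hJ0 : (∫ x in Γ, cross3 (x - c) (n x) ∂σ) = 0)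
    -- the relations of the trivial decomposition
    (hU_eq : ∀ x ∈ Ω, ρ • U x = -grad3 p x)
    (hv_eq : m • v = ∫ x in Γ, p x • n x ∂σ)
    (hω_eq : 𝕀 *ᵥ ω = ∫ x in Γ, p x • cross3 (x - c) (n x) ∂σ)
    -- incompressibility and non-penetration conditions
    (hdivfree : ∀ x ∈ Ω,
      LinearMap.trace ℝ (Fin 3 → ℝ) (fderiv ℝ U x : (Fin 3 → ℝ) →ₗ[ℝ] (Fin 3 → ℝ)) = 0)
    (hbcΓ : ∀ x ∈ Γ, U x ⬝ᵥ n x = v ⬝ᵥ n x + ω ⬝ᵥ cross3 (x - c) (n x))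
    (hbcΓ' : ∀ x ∈ Γ', U x ⬝ᵥ n x = 0)
    -- integrability and the divergence theorem on the domain Ω
    (hint1 : IntegrableOn (fun x => grad3 p x ⬝ᵥ grad3 p x) Ω)
    (hint2 : IntegrableOn (fun x => p x • n x) Γ σ)
    (hint3 : IntegrableOn (fun x => p x • cross3 (x - c) (n x)) Γ σ)
    (hdiv : ∀ F : (Fin 3 → ℝ) → (Fin 3 → ℝ), ContDiff ℝ 1 F →
      ∫ x in Ω, LinearMap.trace ℝ (Fin 3 → ℝ) (fderiv ℝ F x : (Fin 3 → ℝ) →ₗ[ℝ] (Fin 3 → ℝ))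
        = ∫ x in Γ ∪ Γ', F x ⬝ᵥ n x ∂σ) :
    (∀ x ∈ Ω, U x = 0) ∧ v = 0 ∧ ω = 0 ∧ ∃ k : ℝ, ∀ x ∈ Ω, p x = k := by
  classical
  have hρ' : (0:ℝ) < 1/ρ := by positivity
  have hpd : Differentiable ℝ p := hp.differentiable (by norm_num)
  have hUd : Differentiable ℝ U := hU.differentiable one_ne_zero
  set q : (Fin 3 → ℝ) → ℝ := fun x => grad3 p x ⬝ᵥ grad3 p x with hqdef
  have hqnonneg : ∀ x, 0 ≤ q x := fun x =>
    Finset.sum_nonneg fun i _ => mul_self_nonneg _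
  -- the vector field p • U and its divergence on Ω
  set F : (Fin 3 → ℝ) → (Fin 3 → ℝ) := fun x => p x • U x with hFdef
  have hFc : ContDiff ℝ 1 F := (hp.of_le (by norm_num)).smul hU
  have hdivF : ∀ x ∈ Ω,
      LinearMap.trace ℝ (Fin 3 → ℝ) (fderiv ℝ F x : (Fin 3 → ℝ) →ₗ[ℝ] (Fin 3 → ℝ))
        = -(1/ρ) * q x := by
    intro x hx
    have hfd : fderiv ℝ F x = p x • fderiv ℝ U x + (fderiv ℝ p x).smulRight (U x) :=
      fderiv_smul (hpd x) (hUd x)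
    have hUx : U x = -(1/ρ) • grad3 p x := by
      have h1 := hU_eq x hx
      have h2 : ρ⁻¹ • (ρ • U x) = ρ⁻¹ • (-grad3 p x) := by rw [h1]
      rw [smul_smul, inv_mul_cancel₀ hρ.ne', one_smul] at h2
      rw [h2, smul_neg, ← neg_smul, one_div]
    rw [trace_clm_eq_sum, hfd]
    simp only [ContinuousLinearMap.add_apply, ContinuousLinearMap.coe_smul',
      Pi.smul_apply, ContinuousLinearMap.smulRight_apply, Pi.add_apply, smul_eq_mul]
    rw [Finset.sum_add_distrib, ← Finset.mul_sum]
    have hdU : ∑ i, (fderiv ℝ U x (Pi.single i 1)) i = 0 := by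
      rw [← trace_clm_eq_sum]; exact hdivfree x hx
    rw [hdU, mul_zero, zero_add]
    have hgd : ∑ i, fderiv ℝ p x (Pi.single i 1) * U x i = grad3 p x ⬝ᵥ U x := rfl
    rw [hgd, hUx, dotProduct_smul]
    simp only [hqdef, smul_eq_mul]
  -- the boundary integrand and the auxiliary boundary function
  set bf : (Fin 3 → ℝ) → ℝ := fun x => F x ⬝ᵥ n x with hbfdef
  set g : (Fin 3 → ℝ) → ℝ :=
    fun x => dotCLM v (p x • n x) + dotCLM ω (p x • cross3 (x - c) (n x)) with hgdef
  have hgint : IntegrableOn g Γ σ :=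
    ((dotCLM v).integrable_comp hint2).add ((dotCLM ω).integrable_comp hint3)
  have hgval : ∫ x in Γ, g x ∂σ = m * (v ⬝ᵥ v) + ω ⬝ᵥ (𝕀 *ᵥ ω) := by
    rw [hgdef]
    rw [integral_add ((dotCLM v).integrable_comp hint2) ((dotCLM ω).integrable_comp hint3),
      (dotCLM v).integral_comp_comm hint2, (dotCLM ω).integral_comp_comm hint3,
      ← hv_eq, ← hω_eq]
    simp [dotProduct_smul]
  have hvv : 0 ≤ v ⬝ᵥ v := Finset.sum_nonneg fun i _ => mul_self_nonneg _
  have hωω : 0 ≤ ω ⬝ᵥ (𝕀 *ᵥ ω) := by simpa using h𝕀.posSemidef.dotProduct_mulVec_nonneg ω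
  -- the divergence identity
  have hmain : -(1/ρ) * (∫ x in Ω, q x) = ∫ x in Γ ∪ Γ', bf x ∂σ := by
    rw [← hdiv F hFc]
    rw [setIntegral_congr_fun hopen.measurableSet
      (fun x hx => hdivF x hx : ∀ x ∈ Ω, _ = -(1/ρ) * q x)]
    exact (integral_const_mul _ _).symm
  have hIpos : 0 ≤ ∫ x in Ω, q x :=
    setIntegral_nonneg hopen.measurableSet fun x _ => hqnonneg x
  -- boundary values of bf
  have hbfΓ : ∀ x ∈ Γ, bf x = g x := by
    intro x hx
    have h1 : bf x = p x * (U x ⬝ᵥ n x) := smul_dotProduct _ _ _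
    rw [h1, hbcΓ x hx, hgdef]
    simp only [dotCLM_apply, dotProduct_smul, smul_eq_mul]
    ring
  have hbfΓ' : ∀ x ∈ Γ', bf x = 0 := by
    intro x hx
    have h1 : bf x = p x * (U x ⬝ᵥ n x) := smul_dotProduct _ _ _
    rw [h1, hbcΓ' x hx, mul_zero]
  -- the Dirichlet energy vanishes
  have hI0 : (∫ x in Ω, q x) = 0 := by
    by_cases hbi : IntegrableOn bf (Γ ∪ Γ') σ
    · have hsplit := setIntegral_union_eq_of_eqOn hbi hbfΓ' hgint hbfΓ
      have h2 : -(1/ρ) * (∫ x in Ω, q x) = m * (v ⬝ᵥ v) + ω ⬝ᵥ (𝕀 *ᵥ ω) :=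
        hmain.trans (hsplit.trans hgval)
      nlinarith [mul_nonneg hm.le hvv]
    · have h0 : ∫ x in Γ ∪ Γ', bf x ∂σ = 0 := integral_undef hbi
      have h2 := hmain.trans h0
      nlinarith
  -- hence the gradient of p vanishes identically on Ω
  have hqc : Continuous q := by
    have h1 : Continuous fun x => fderiv ℝ p x := hp.continuous_fderiv (by norm_num)
    have h2 : Continuous fun x => grad3 p x :=
      continuous_pi fun i => h1.clm_apply continuous_const
    exact continuous_finset_sum _ fun i _ =>
      ((continuous_apply i).comp h2).mul ((continuous_apply i).comp h2)
  have hq0 : ∀ x ∈ Ω, q x = 0 := by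
    have hae : q =ᵐ[volume.restrict Ω] 0 :=
      (integral_eq_zero_iff_of_nonneg (fun x => hqnonneg x) hint1).mp hI0
    intro x hx
    by_contra hne
    have hW : IsOpen {y | q y ≠ 0} := by
      have : {y | q y ≠ 0} = (q ⁻¹' {0})ᶜ := by ext y; simp
      rw [this]
      exact (isClosed_singleton.preimage hqc).isOpen_compl
    have hnull : volume.restrict Ω {y | q y ≠ 0} = 0 := by
      have := ae_iff.mp hae
      simpa using this
    rw [Measure.restrict_apply hW.measurableSet] at hnull
    have hopen2 : IsOpen ({y | q y ≠ 0} ∩ Ω) := hW.inter hopen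
    have hne2 : ({y | q y ≠ 0} ∩ Ω).Nonempty := ⟨x, hne, hx⟩
    exact absurd hnull (hopen2.measure_pos volume hne2).ne'
  have hgrad0 : ∀ x ∈ Ω, grad3 p x = 0 := fun x hx =>
    dotProduct_self_eq_zero.mp (hq0 x hx)
  -- U vanishes on Ω
  have hU0 : ∀ x ∈ Ω, U x = 0 := by
    intro x hx
    have h1 := hU_eq x hx
    rw [hgrad0 x hx, neg_zero, smul_eq_zero] at h1
    exact h1.resolve_left hρ.ne'
  -- U vanishes on Γ (by continuity up to the closure)
  have hUΓ : ∀ x ∈ Γ, U x = 0 := by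
    have hEq : Set.EqOn U 0 Ω := fun x hx => hU0 x hx
    have hcl := hEq.closure hU.continuous continuous_const
    intro x hx
    have hxfr : x ∈ frontier Ω := hbdry ▸ Set.mem_union_left Γ' hx
    exact hcl (frontier_subset_closure hxfr)
  -- hence the boundary function g vanishes on Γ
  have hgΓ0 : ∀ x ∈ Γ, g x = 0 := by
    intro x hx
    have h1 : g x = p x * (U x ⬝ᵥ n x) := by
      simp only [hgdef, dotCLM_apply, dotProduct_smul, smul_eq_mul]
      rw [hbcΓ x hx]; ring
    rw [h1, hUΓ x hx, zero_dotProduct, mul_zero]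
  -- so m|v|² + ω·𝕀ω = 0
  have hsum0 : m * (v ⬝ᵥ v) + ω ⬝ᵥ (𝕀 *ᵥ ω) = 0 := by
    have hgu : IntegrableOn g (Γ ∪ Γ) σ := by rwa [Set.union_self]
    have h0 := setIntegral_union_eq_of_eqOn hgu hgΓ0 (integrable_zero _ _ _) hgΓ0
    simp only [Set.union_self, Pi.zero_apply, integral_zero] at h0
    rw [← hgval, h0]
  have hv0 : v = 0 := by
    have h1 : m * (v ⬝ᵥ v) = 0 := by nlinarith [mul_nonneg hm.le hvv]
    exact dotProduct_self_eq_zero.mp (by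
      have := mul_eq_zero.mp h1
      exact this.resolve_left hm.ne')
  have hω0 : ω = 0 := by
    by_contra hne
    have := h𝕀.dotProduct_mulVec_pos hne
    simp only [star_trivial] at this
    nlinarith [mul_nonneg hm.le hvv]
  -- p is constant on Ω
  have hfderiv0 : ∀ x ∈ Ω, fderiv ℝ p x = 0 := by
    intro x hx
    have hcomp : ∀ i, fderiv ℝ p x (Pi.single i 1) = 0 := fun i =>
      congrFun (hgrad0 x hx) i
    apply ContinuousLinearMap.coe_injective
    refine Module.Basis.ext (Pi.basisFun ℝ (Fin 3)) fun i => ?_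
    simpa [Pi.basisFun_apply] using hcomp i
  obtain ⟨x₀, hx₀⟩ := hconn.nonempty
  have hconst : ∀ x ∈ Ω, p x = p x₀ := by
    have hopenU : IsOpen {x | x ∈ Ω ∧ p x = p x₀} := by
      rw [Metric.isOpen_iff]
      intro y hy
      obtain ⟨ε, hε, hball⟩ := Metric.isOpen_iff.mp hopen y hy.1
      refine ⟨ε, hε, fun z hz => ?_⟩
      have hconv : Convex ℝ (Metric.ball y ε) := convex_ball y ε
      have hdiffOn : DifferentiableOn ℝ p (Metric.ball y ε) :=
        hpd.differentiableOn
      have hfd0 : ∀ w ∈ Metric.ball y ε, fderivWithin ℝ p (Metric.ball y ε) w = 0 := by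
        intro w hw
        rw [fderivWithin_of_mem_nhds (Metric.isOpen_ball.mem_nhds hw)]
        exact hfderiv0 w (hball hw)
      have := hconv.is_const_of_fderivWithin_eq_zero hdiffOn hfd0 hz
        (Metric.mem_ball_self hε)
      refine ⟨hball hz, ?_⟩
      rw [this, hy.2]
    have hopenV : IsOpen {x | p x ≠ p x₀} := by
      have : {x | p x ≠ p x₀} = (p ⁻¹' {p x₀})ᶜ := by ext y; simp
      rw [this]
      exact (isClosed_singleton.preimage hp.continuous).isOpen_compl
    intro x hx
    by_contra hne
    have hpre := hconn.isPreconnected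
    have hcover : Ω ⊆ {x | x ∈ Ω ∧ p x = p x₀} ∪ {x | p x ≠ p x₀} := by
      intro y hy
      by_cases h : p y = p x₀
      · exact Or.inl ⟨hy, h⟩
      · exact Or.inr h
    have hne1 : (Ω ∩ {x | x ∈ Ω ∧ p x = p x₀}).Nonempty := ⟨x₀, hx₀, hx₀, rfl⟩
    have hne2 : (Ω ∩ {x | p x ≠ p x₀}).Nonempty := ⟨x, hx, hne⟩
    obtain ⟨z, _, ⟨_, hz1⟩, hz2⟩ := hpre _ _ hopenU hopenV hcover hne1 hne2
    exact hz2 hz1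
  exact ⟨hU0, hv0, hω0, p x₀, hconst⟩
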